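/- Let K be a field, m, σ ≥ 1, E ∈ K^{m×σ}, J ∈ K^{σ×σ}, and s ∈ ℤ^m. If P ∈ K[X]^{m×m} is an interpolation basis for (E,J) which is in s-Popov form, and δ_1,…,δ_m are the degrees of its diagonal entries, then δ_1 + ⋯ + δ_m ≤ σ. -/

import Mathlib

open Polynomial Matrix

/-- Degree of a polynomial as an element of `WithBot ℤ`, with `degZ 0 = ⊥`. -/
noncomputable def degZ {K : Type*} [Field K] (p : Polynomial K) : WithBot ℤ :=
  p.degree.map (fun n : ℕ => (n : ℤ))

/-- The `s`-degree of a row vector `p`: `max_j (deg p_j + s_j)`. -/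
noncomputable def sdeg {K : Type*} [Field K] {ι : Type*} [Fintype ι]
    (s : ι → ℤ) (p : ι → Polynomial K) : WithBot ℤ :=
  Finset.univ.sup fun j => degZ (p j) + (s j : WithBot ℤ)

/-- `j` is the `s`-pivot index of the row `p`: the largest index at which the
`s`-degree of `p` is attained. -/
def IsPivotIndex {K : Type*} [Field K] {ι : Type*} [Fintype ι] [LinearOrder ι]
    (s : ι → ℤ) (p : ι → Polynomial K) (j : ι) : Prop :=
  degZ (p j) + (s j : WithBot ℤ) = sdeg s p ∧
    ∀ k, j < k → degZ (p k) + (s k : WithBot ℤ) ≠ sdeg s p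

/-- `P` is in `s`-Popov form: it is nonsingular, the `s`-pivot entries are monic and
on the diagonal, and in each column the nonpivot entries have degree less than
the pivot entry. -/
def IsPopov {K : Type*} [Field K] {m : ℕ} (s : Fin m → ℤ)
    (P : Matrix (Fin m) (Fin m) (Polynomial K)) : Prop :=
  P.det ≠ 0 ∧ (∀ i, IsPivotIndex s (P i) i) ∧ (∀ i, (P i i).Monic) ∧
    ∀ i j, i ≠ j → (P i j).degree < (P j j).degree

/-- `p` is an interpolant for `(E, J)`: `∑ i, (row i of E) ⋅ (p i)(J) = 0`. -/
def IsInterpolant {K : Type*} [Field K] {ι n : Type*} [Fintype ι] [Fintype n] [DecidableEq n]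
    (E : Matrix ι n K) (J : Matrix n n K) (p : ι → Polynomial K) : Prop :=
  ∑ i, Matrix.vecMul (E i) (Polynomial.aeval J (p i)) = 0

/-- `P` is an interpolation basis for `(E, J)`: its rows form a basis of the
`K[X]`-module of interpolants for `(E, J)`. -/
def IsInterpolationBasis {K : Type*} [Field K] {ι n : Type*} [Fintype ι] [Fintype n]
    [DecidableEq n] (E : Matrix ι n K) (J : Matrix n n K)
    (P : Matrix ι ι (Polynomial K)) : Prop :=
  LinearIndependent (Polynomial K) (fun i => P i) ∧
    (Submodule.span (Polynomial K) (Set.range fun i => P i) : Set (ι → Polynomial K))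
      = {p | IsInterpolant E J p}

/-- The product `Q ⋅ E`: the matrix over `K` whose `i`-th row is `∑ j, (E j) ⋅ (Q i j)(J)`. -/
noncomputable def polMulMat {K : Type*} [Field K] {κ ι n : Type*} [Fintype κ] [Fintype ι]
    [Fintype n] [DecidableEq n]
    (Q : Matrix κ ι (Polynomial K)) (E : Matrix ι n K) (J : Matrix n n K) : Matrix κ n K :=
  fun i => ∑ j, Matrix.vecMul (E j) (Polynomial.aeval J (Q i j))

/-- The `s`-leading matrix of `R`: if row `i` has `s`-degree `d`, its `(i,j)` entry is
the coefficient of degree `d - s j` in `R i j` (and `0` if row `i` is zero). -/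
noncomputable def leadingMatrix {K : Type*} [Field K] {ι : Type*} [Fintype ι]
    (s : ι → ℤ) (R : Matrix ι ι (Polynomial K)) : Matrix ι ι K := fun i j =>
  WithBot.recBotCoe 0
    (fun d => if 0 ≤ d - s j then (R i j).coeff (d - s j).toNat else 0)
    (sdeg s (R i))

/- ---------- auxiliary lemmas ---------- -/

lemma degZ_of_ne_zero {K : Type*} [Field K] {p : Polynomial K} (hp : p ≠ 0) :
    degZ p = ((p.natDegree : ℤ) : WithBot ℤ) := by
  rw [degZ, Polynomial.degree_eq_natDegree hp]
  rfl

/-- Predictable degree property of `s`-Popov forms: any nonzero vector in the row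
space of `P` has some coordinate `j` with degree at least `deg P j j`. -/
lemma popov_row_space_degree {K : Type*} [Field K] {m : ℕ} (s : Fin m → ℤ)
    (P : Matrix (Fin m) (Fin m) (Polynomial K)) (hpopov : IsPopov s P)
    (q : Fin m → Polynomial K) (hq : ∃ i, q i ≠ 0) :
    ∃ j, (∑ i, q i • P i) j ≠ 0 ∧
      (P j j).natDegree ≤ ((∑ i, q i • P i) j).natDegree := by
  obtain ⟨-, hpivot, hmonic, -⟩ := hpopov
  classical
  set S : Finset (Fin m) := Finset.univ.filter (fun i => q i ≠ 0) with hSdef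
  have hS : S.Nonempty := by
    obtain ⟨i, hi⟩ := hq
    exact ⟨i, by simp [hSdef, hi]⟩
  set f : Fin m → ℤ := fun i =>
    ((q i).natDegree : ℤ) + (P i i).natDegree + s i with hfdef
  set D : ℤ := S.sup' hS f with hDdef
  set T : Finset (Fin m) := S.filter (fun i => f i = D) with hTdef
  have hT : T.Nonempty := by
    obtain ⟨i, hiS, hieq⟩ := Finset.exists_mem_eq_sup' hS f
    exact ⟨i, by simp [hTdef, hiS, hieq.symm, hDdef]⟩
  set j : Fin m := T.max' hT with hjdef
  have hjT : j ∈ T := T.max'_mem hT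
  have hjS : q j ≠ 0 := by
    have := (Finset.mem_filter.1 hjT).1
    simpa [hSdef] using this
  have hfj : f j = D := (Finset.mem_filter.1 hjT).2
  set N : ℕ := (q j).natDegree + (P j j).natDegree with hNdef
  -- key inequality in ℤ: for i ≠ j with q i ≠ 0 and P i j ≠ 0,
  --   natDegree (q i) + natDegree (P i j) < N
  have key : ∀ i, i ≠ j → q i ≠ 0 → P i j ≠ 0 →
      (q i).natDegree + (P i j).natDegree < N := by
    intro i hij hqi hPij
    have hiS : i ∈ S := by simp [hSdef, hqi]
    have hPii : P i i ≠ 0 := (hmonic i).ne_zero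
    -- entry (i,j) is bounded by the s-degree of row i
    have hle : degZ (P i j) + (s j : WithBot ℤ) ≤ sdeg s (P i) := by
      rw [sdeg]
      exact Finset.le_sup (f := fun k => degZ (P i k) + (s k : WithBot ℤ))
        (Finset.mem_univ j)
    have hsdeg : sdeg s (P i) = degZ (P i i) + (s i : WithBot ℤ) :=
      ((hpivot i).1).symm
    have hle2 : ((P i j).natDegree : ℤ) + s j ≤ ((P i i).natDegree : ℤ) + s i := by
      rw [hsdeg, degZ_of_ne_zero hPij, degZ_of_ne_zero hPii] at hle
      rw [← WithBot.coe_add, ← WithBot.coe_add, WithBot.coe_le_coe] at hle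
      exact hle
    have hfiD : f i ≤ D := Finset.le_sup' f hiS
    have hN : (N : ℤ) = D - s j := by
      push_cast [hNdef]
      have : f j = D := hfj
      rw [hfdef] at this
      simp only at this
      omega
    rcases lt_or_gt_of_ne hij with hlt | hgt
    · -- i < j : the inequality hle2 is strict by the pivot condition
      have hne : degZ (P i j) + (s j : WithBot ℤ) ≠ sdeg s (P i) :=
        (hpivot i).2 j hlt
      have hlt2 : ((P i j).natDegree : ℤ) + s j < ((P i i).natDegree : ℤ) + s i := by
        rcases lt_or_eq_of_le hle2 with h | h
        · exact h
        · exfalso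
          apply hne
          rw [hsdeg, degZ_of_ne_zero hPij, degZ_of_ne_zero hPii,
            ← WithBot.coe_add, ← WithBot.coe_add, WithBot.coe_inj]
          exact h
      have : ((q i).natDegree : ℤ) + (P i j).natDegree < (N : ℤ) := by
        rw [hfdef] at hfiD
        simp only at hfiD
        omega
      exact_mod_cast this
    · -- j < i : then f i < D since j is the largest index attaining D
      have hfi : f i ≠ D := by
        intro h
        have : i ∈ T := by simp [hTdef, hiS, h]
        exact absurd (T.le_max' i this) (not_le.2 hgt)
      have hfiD' : f i < D := lt_of_le_of_ne hfiD hfi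
      have : ((q i).natDegree : ℤ) + (P i j).natDegree < (N : ℤ) := by
        rw [hfdef] at hfiD'
        simp only at hfiD'
        omega
      exact_mod_cast this
  -- now compute the coefficient of X^N in the j-th coordinate
  have happ : (∑ i, q i • P i) j = ∑ i, q i * P i j := by
    rw [Finset.sum_apply j Finset.univ (fun i => q i • P i)]
    exact Finset.sum_congr rfl fun i _ => rfl
  have hcoeff : ((∑ i, q i • P i) j).coeff N = (q j).leadingCoeff := by
    rw [happ, Polynomial.finset_sum_coeff]
    rw [Finset.sum_eq_single j]
    · rw [hNdef, Polynomial.coeff_mul_degree_add_degree, (hmonic j).leadingCoeff, mul_one]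
    · intro i _ hij
      by_cases hqi : q i = 0
      · simp [hqi]
      by_cases hPij : P i j = 0
      · simp [hPij]
      apply Polynomial.coeff_eq_zero_of_degree_lt
      rw [Polynomial.degree_mul, Polynomial.degree_eq_natDegree hqi,
        Polynomial.degree_eq_natDegree hPij, ← Nat.cast_add, Nat.cast_lt]
      exact key i hij hqi hPij
    · intro h
      exact absurd (Finset.mem_univ j) h
  have hlc : (q j).leadingCoeff ≠ 0 := Polynomial.leadingCoeff_ne_zero.2 hjS
  refine ⟨j, ?_, ?_⟩
  · intro h
    rw [h] at hcoeff
    exact hlc (by simpa using hcoeff.symm)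
  · calc (P j j).natDegree ≤ N := Nat.le_add_left _ _
      _ ≤ _ := Polynomial.le_natDegree_of_ne_zero (by rw [hcoeff]; exact hlc)

lemma vecMul_sum_aux {K : Type*} [Field K] {n : Type*} [Fintype n] {ι : Type*}
    (v : n → K) (t : Finset ι) (A : ι → Matrix n n K) :
    Matrix.vecMul v (∑ k ∈ t, A k) = ∑ k ∈ t, Matrix.vecMul v (A k) := by
  ext j
  rw [Finset.sum_apply j t (fun k => Matrix.vecMul v (A k))]
  simp only [Matrix.vecMul, dotProduct, Matrix.sum_apply, Finset.mul_sum]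
  exact Finset.sum_comm

lemma vecMul_smul_aux {K : Type*} [Field K] {n : Type*} [Fintype n]
    (v : n → K) (c : K) (A : Matrix n n K) :
    Matrix.vecMul v (c • A) = c • Matrix.vecMul v A := by
  ext j
  simp only [Matrix.vecMul, dotProduct, Matrix.smul_apply, Pi.smul_apply,
    smul_eq_mul, Finset.mul_sum]
  exact Finset.sum_congr rfl fun i _ => by ring

/-- if `P` is an interpolation basis for `(E, J)` in `s`-Popov form with
diagonal degrees `δ`, then `δ 1 + ⋯ + δ m ≤ σ`. -/
theorem sum_minimal_degree_le {K : Type*} [Field K] {m σ : ℕ}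
    (hm : 1 ≤ m) (hσ : 1 ≤ σ)
    (E : Matrix (Fin m) (Fin σ) K) (J : Matrix (Fin σ) (Fin σ) K) (s : Fin m → ℤ)
    (P : Matrix (Fin m) (Fin m) (Polynomial K))
    (hbasis : IsInterpolationBasis E J P) (hpopov : IsPopov s P)
    (δ : Fin m → ℕ) (hδ : ∀ i, (P i i).natDegree = δ i) :
    ∑ i, δ i ≤ σ := by
  classical
  set v : (Σ j : Fin m, Fin (δ j)) → (Fin σ → K) :=
    fun k => Matrix.vecMul (E k.1) (J ^ (k.2 : ℕ)) with hvdef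
  have hv : LinearIndependent K v := by
    rw [Fintype.linearIndependent_iff]
    intro g hg
    set p : Fin m → Polynomial K :=
      fun i => ∑ e : Fin (δ i), Polynomial.C (g ⟨i, e⟩) * Polynomial.X ^ (e : ℕ)
      with hpdef
    -- the map p ↦ ∑ E_i · p_i(J) applied to p equals ∑ g k • v k
    have hφ : ∑ i, Matrix.vecMul (E i) (Polynomial.aeval J (p i))
        = ∑ k : (Σ j : Fin m, Fin (δ j)), g k • v k := by
      have h1 : ∀ i, (Polynomial.aeval J (p i))
          = ∑ e : Fin (δ i), g ⟨i, e⟩ • (J ^ (e : ℕ)) := by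
        intro i
        rw [hpdef]
        simp only [map_sum, _root_.map_mul, Polynomial.aeval_C, Polynomial.aeval_X_pow,
          Algebra.smul_def]
      calc ∑ i, Matrix.vecMul (E i) (Polynomial.aeval J (p i))
          = ∑ i, ∑ e : Fin (δ i), g ⟨i, e⟩ • Matrix.vecMul (E i) (J ^ (e : ℕ)) := by
            refine Finset.sum_congr rfl fun i _ => ?_
            rw [h1, vecMul_sum_aux]
            exact Finset.sum_congr rfl fun e _ => vecMul_smul_aux _ _ _
        _ = ∑ k : (Σ j : Fin m, Fin (δ j)), g k • v k := by
            rw [← Finset.univ_sigma_univ, Finset.sum_sigma]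
    have hint : IsInterpolant E J p := by
      unfold IsInterpolant
      rw [hφ, hg]
    -- hence p is in the row span of P
    have hmem : p ∈ Submodule.span (Polynomial K) (Set.range fun i => P i) := by
      have := hbasis.2
      rw [← SetLike.mem_coe, this]
      exact hint
    obtain ⟨q, hqsum⟩ := (Submodule.mem_span_range_iff_exists_fun (Polynomial K)).1 hmem
    -- degrees of coordinates of p are < δ
    have hdegp : ∀ i, (p i).degree < (δ i : WithBot ℕ) := by
      intro i
      rw [hpdef]
      refine lt_of_le_of_lt (Polynomial.degree_sum_le _ _) ?_
      rw [Finset.sup_lt_iff (by exact WithBot.bot_lt_coe _)]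
      intro e _
      refine lt_of_le_of_lt (Polynomial.degree_C_mul_X_pow_le _ _) ?_
      exact_mod_cast e.2
    -- p must be zero, else the predictable degree property is violated
    have hp0 : p = 0 := by
      by_contra hp
      have hqne : ∃ i, q i ≠ 0 := by
        by_contra h
        push_neg at h
        apply hp
        rw [← hqsum]
        simp [h]
      obtain ⟨j, hj1, hj2⟩ := popov_row_space_degree s P hpopov q hqne
      rw [hqsum] at hj1 hj2
      have : (p j).natDegree < δ j :=
        (Polynomial.natDegree_lt_iff_degree_lt hj1).2 (hdegp j)
      rw [hδ j] at hj2
      omega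
    -- conclude all coefficients vanish
    intro k
    obtain ⟨j, e⟩ := k
    have : (p j).coeff (e : ℕ) = 0 := by rw [hp0]; simp
    rw [hpdef] at this
    simp only [Polynomial.finset_sum_coeff, Polynomial.coeff_C_mul,
      Polynomial.coeff_X_pow] at this
    rw [Finset.sum_eq_single e] at this
    · simpa using this
    · intro e' _ hne
      have : (e : ℕ) ≠ (e' : ℕ) := fun h => hne (Fin.val_injective h).symm
      simp [this]
    · intro h
      exact absurd (Finset.mem_univ e) h
  have hcard := hv.fintype_card_le_finrank
  rw [Fintype.card_sigma, Module.finrank_fin_fun] at hcard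
  simpa using hcard
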